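/- Let $b$ act on $(\mathbb{Z}/2\mathbb{Z})[t]/(t^{m})$ by $f \mapsto (1+t)f$. For a word of the form $0^i 1 w$ (i.e., a polynomial whose lowest-degree nonzero term is $t^i$), the orbit size under $\langle b \rangle$ equals $2^{\lfloor \log_2 |w| \rfloor + 1}$, where $|w|$ is the length of the suffix $w$; in particular the orbit size of $0^i 1 w$ equals the orbit size of $1 w$. -/

import Mathlib

open Polynomial

private lemma frob13 (s : ℕ) : ((1 + X : Polynomial (ZMod 2)) ^ (2 ^ s)) = 1 + X ^ (2 ^ s) := by
  rw [add_pow_char_pow, one_pow]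

private lemma dvd_of_cond13 (k N : ℕ) (hk : 1 ≤ k) (hN : 0 < N)
    (h : (X : Polynomial (ZMod 2)) ^ (1 + k) ∣ (1 + X) ^ N - 1) :
    2 ^ (Nat.log 2 k + 1) ≤ N := by
  set s := N.factorization 2 with hs
  have hq : N = 2 ^ s * (N / 2 ^ s) := (Nat.ordProj_mul_ordCompl_eq_self N 2).symm
  have hqodd : ¬ 2 ∣ (N / 2 ^ s) := Nat.not_dvd_ordCompl Nat.prime_two hN.ne'
  have hexp : ((1 + X : Polynomial (ZMod 2)) ^ N) =
      Polynomial.expand (ZMod 2) (2 ^ s) ((1 + X) ^ (N / 2 ^ s)) := by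
    rw [map_pow, map_add, map_one, Polynomial.expand_X, ← frob13, ← pow_mul, ← hq]
  have hcoeff : ((1 + X : Polynomial (ZMod 2)) ^ N - 1).coeff (2 ^ s) ≠ 0 := by
    rw [Polynomial.coeff_sub, hexp, Polynomial.coeff_expand (Nat.pow_pos (n := s) (by norm_num)),
      if_pos dvd_rfl, Nat.div_self (Nat.pow_pos (n := s) (by norm_num)),
      Polynomial.coeff_one_add_X_pow, Polynomial.coeff_one,
      if_neg (by positivity : (2:ℕ)^s ≠ 0), sub_zero, Nat.choose_one_right]
    intro hzero
    exact hqodd ((ZMod.natCast_eq_zero_iff _ 2).mp hzero)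
  have hlt : k < 2 ^ s := by
    by_contra hle
    push_neg at hle
    exact hcoeff (Polynomial.X_pow_dvd_iff.mp h _ (by omega))
  have hslog : Nat.log 2 k + 1 ≤ s := (Nat.log_lt_iff_lt_pow one_lt_two (by omega)).mpr hlt
  calc 2 ^ (Nat.log 2 k + 1) ≤ 2 ^ s := Nat.pow_le_pow_right (by norm_num) hslog
    _ ≤ N := Nat.le_of_dvd hN (Nat.ordProj_dvd N 2)

private lemma main13 (i k : ℕ) (hk : 1 ≤ k) (g : Polynomial (ZMod 2)) :
    IsLeast {N : ℕ | 0 < N ∧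
        (Ideal.Quotient.mk
            (Ideal.span {(Polynomial.X : Polynomial (ZMod 2)) ^ (i + 1 + k)})
            (1 + Polynomial.X)) ^ N *
          Ideal.Quotient.mk
            (Ideal.span {(Polynomial.X : Polynomial (ZMod 2)) ^ (i + 1 + k)})
            (Polynomial.X ^ i * (1 + Polynomial.X * g)) =
        Ideal.Quotient.mk
            (Ideal.span {(Polynomial.X : Polynomial (ZMod 2)) ^ (i + 1 + k)})
            (Polynomial.X ^ i * (1 + Polynomial.X * g))}
      (2 ^ (Nat.log 2 k + 1)) := by
  have hu : ¬ (X : Polynomial (ZMod 2)) ∣ (1 + X * g) := by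
    rw [Polynomial.X_dvd_iff]
    simp
  have hiff : ∀ N : ℕ,
      ((Ideal.Quotient.mk
            (Ideal.span {(Polynomial.X : Polynomial (ZMod 2)) ^ (i + 1 + k)})
            (1 + Polynomial.X)) ^ N *
          Ideal.Quotient.mk _ (Polynomial.X ^ i * (1 + Polynomial.X * g)) =
        Ideal.Quotient.mk _ (Polynomial.X ^ i * (1 + Polynomial.X * g))) ↔
      (X : Polynomial (ZMod 2)) ^ (1 + k) ∣ (1 + X) ^ N - 1 := by
    intro N
    rw [← map_pow, ← map_mul, Ideal.Quotient.eq, Ideal.mem_span_singleton,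
      show (1 + X : Polynomial (ZMod 2)) ^ N * (X ^ i * (1 + X * g)) - X ^ i * (1 + X * g)
        = X ^ i * (((1 + X) ^ N - 1) * (1 + X * g)) by ring,
      show i + 1 + k = i + (1 + k) by ring, pow_add,
      mul_dvd_mul_iff_left (pow_ne_zero i (Polynomial.X_ne_zero))]
    constructor
    · exact fun h => Polynomial.prime_X.pow_dvd_of_dvd_mul_right _ hu h
    · exact fun h => h.mul_right _
  constructor
  · refine ⟨Nat.pow_pos (by norm_num), (hiff _).mpr ?_⟩
    rw [frob13, add_sub_cancel_left]
    exact pow_dvd_pow _ (by have := Nat.lt_pow_succ_log_self one_lt_two k; omega)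
  · rintro N ⟨hN, hcond⟩
    exact dvd_of_cond13 k N hk hN ((hiff N).mp hcond)

theorem stmt13 (i k : ℕ) (hk : 1 ≤ k) (g : Polynomial (ZMod 2)) :
    IsLeast {N : ℕ | 0 < N ∧
        (Ideal.Quotient.mk
            (Ideal.span {(Polynomial.X : Polynomial (ZMod 2)) ^ (i + 1 + k)})
            (1 + Polynomial.X)) ^ N *
          Ideal.Quotient.mk
            (Ideal.span {(Polynomial.X : Polynomial (ZMod 2)) ^ (i + 1 + k)})
            (Polynomial.X ^ i * (1 + Polynomial.X * g)) =
        Ideal.Quotient.mk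
            (Ideal.span {(Polynomial.X : Polynomial (ZMod 2)) ^ (i + 1 + k)})
            (Polynomial.X ^ i * (1 + Polynomial.X * g))}
      (2 ^ (Nat.log 2 k + 1)) ∧
    IsLeast {N : ℕ | 0 < N ∧
        (Ideal.Quotient.mk
            (Ideal.span {(Polynomial.X : Polynomial (ZMod 2)) ^ (1 + k)})
            (1 + Polynomial.X)) ^ N *
          Ideal.Quotient.mk
            (Ideal.span {(Polynomial.X : Polynomial (ZMod 2)) ^ (1 + k)})
            (1 + Polynomial.X * g) =
        Ideal.Quotient.mk
            (Ideal.span {(Polynomial.X : Polynomial (ZMod 2)) ^ (1 + k)})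
            (1 + Polynomial.X * g)}
      (2 ^ (Nat.log 2 k + 1)) := by
  refine ⟨main13 i k hk g, ?_⟩
  have h := main13 0 k hk g
  simpa using h
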